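/- Generalized Dobiński formula: for every integer p ≥ 1, every n ≥ 0, and every real x, the series Σ_{k=0}^∞ x^k·B_n^{p−1}(k)/k! converges and B_n^p(x) = e^{−x}·Σ_{k=0}^∞ x^k·B_n^{p−1}(k)/k!. (For p = 1 this is Dobiński's formula B_n(x) = e^{−x} Σ_{k≥0} x^k k^n/k!.) -/

import Mathlib

/-- Stirling numbers of the second kind. -/
def S2 : ℕ → ℕ → ℕ
  | 0, 0 => 1
  | 0, _ + 1 => 0
  | _ + 1, 0 => 0
  | n + 1, m + 1 => (m + 1) * S2 n (m + 1) + S2 n m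

/-- Entries `S^p_{n,m}` of the `p`-th power of the Stirling matrix (for `p ≥ 1`;
the value at `p = 0` is junk). -/
def Sp : ℕ → ℕ → ℕ → ℕ
  | 0, _, _ => 0
  | 1, n, m => S2 n m
  | p + 2, n, m => ∑ k ∈ Finset.range (n + 1), S2 n k * Sp (p + 1) k m

/-- Higher order Bell polynomials: `B_n^0(x) = x^n`, `B_n^p(x) = ∑_{m=0}^n S^p_{n,m} x^m`. -/
noncomputable def BellP : ℕ → ℕ → ℝ → ℝ
  | 0, n, x => x ^ n
  | p + 1, n, x => ∑ m ∈ Finset.range (n + 1), (Sp (p + 1) n m : ℝ) * x ^ m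

open Finset

lemma S2_eq_zero : ∀ {n m : ℕ}, n < m → S2 n m = 0
  | 0, _ + 1, _ => rfl
  | n + 1, m + 1, h => by
    rw [S2, S2_eq_zero (show n < m + 1 by omega), S2_eq_zero (show n < m by omega)]
    ring

lemma Sp_one (n m : ℕ) : Sp 1 n m = S2 n m := rfl

lemma Sp_two (p n m : ℕ) :
    Sp (p + 2) n m = ∑ k ∈ Finset.range (n + 1), S2 n k * Sp (p + 1) k m := rfl

lemma Sp_eq_zero (p : ℕ) : ∀ {n m : ℕ}, n < m → Sp (p + 1) n m = 0 := by
  induction p with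
  | zero => intro n m h; rw [Sp_one]; exact S2_eq_zero h
  | succ p ih =>
    intro n m h
    rw [Sp_two]
    apply Finset.sum_eq_zero
    intro k hk
    simp only [mem_range] at hk
    rw [ih (show k < m by omega), mul_zero]

lemma Sp_truncate (p : ℕ) (g : ℕ → ℕ) {k n : ℕ} (hk : k ≤ n) :
    ∑ m ∈ range (n + 1), Sp (p + 1) k m * g m
      = ∑ m ∈ range (k + 1), Sp (p + 1) k m * g m := by
  symm
  apply Finset.sum_subset
  · intro a ha; simp only [mem_range] at *; omega
  · intro m _ hm
    simp only [mem_range, not_lt] at hm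
    rw [Sp_eq_zero p (by omega), zero_mul]

lemma Sp_comm (p : ℕ) : ∀ n j : ℕ,
    ∑ m ∈ range (n + 1), Sp (p + 1) n m * S2 m j
      = ∑ k ∈ range (n + 1), S2 n k * Sp (p + 1) k j := by
  induction p with
  | zero => intro n j; rfl
  | succ p ih =>
    intro n j
    simp only [Sp_two, Finset.sum_mul]
    rw [Finset.sum_comm]
    apply Finset.sum_congr rfl
    intro k hk
    simp only [mem_range] at hk
    simp only [mul_assoc, ← Finset.mul_sum]
    congr 1
    rw [Sp_truncate p _ (show k ≤ n by omega), ih k j]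

lemma pow_eq_sum_desc (n k : ℕ) :
    k ^ n = ∑ m ∈ range (n + 1), S2 n m * k.descFactorial m := by
  induction n with
  | zero => simp [S2]
  | succ n ih =>
    have hmul : ∀ m : ℕ, k * k.descFactorial m
        = k.descFactorial (m + 1) + m * k.descFactorial m := by
      intro m
      rcases le_or_gt m k with h | h
      · rw [Nat.descFactorial_succ, ← Nat.add_mul, Nat.sub_add_cancel h]
      · rw [Nat.descFactorial_eq_zero_iff_lt.2 h,
          Nat.descFactorial_eq_zero_iff_lt.2 (by omega)]
        ring
    have : k ^ (n + 1) = ∑ m ∈ range (n + 1), S2 n m * (k * k.descFactorial m) := by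
      rw [pow_succ, mul_comm, ih, Finset.mul_sum]
      exact Finset.sum_congr rfl fun m _ => by ring
    rw [this]
    simp only [hmul, Nat.mul_add]
    rw [Finset.sum_add_distrib]
    have h1 : ∑ m ∈ range (n + 1), S2 n m * (m * k.descFactorial m)
        = ∑ m ∈ range (n + 1), (m + 1) * S2 n (m + 1) * k.descFactorial (m + 1) := by
      rw [Finset.sum_range_succ' (fun m => S2 n m * (m * k.descFactorial m)) n,
        Finset.sum_range_succ, S2_eq_zero (show n < n + 1 by omega)]
      simp only [mul_zero, zero_mul, Nat.mul_zero, add_zero, Nat.zero_mul]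
      exact Finset.sum_congr rfl fun m _ => by ring
    rw [h1, Finset.sum_range_succ' (fun m => S2 (n+1) m * k.descFactorial m) (n+1)]
    show _ = _ + S2 (n + 1) 0 * Nat.descFactorial k 0
    rw [show S2 (n + 1) 0 = 0 from rfl, zero_mul, add_zero, ← Finset.sum_add_distrib]
    refine Finset.sum_congr rfl fun m _ => ?_
    show _ = S2 (n + 1) (m + 1) * _
    rw [show S2 (n + 1) (m + 1) = (m + 1) * S2 n (m + 1) + S2 n m from rfl]
    ring

lemma exp_eq_tsum' (x : ℝ) : Real.exp x = ∑' n : ℕ, x ^ n / n.factorial := by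
  rw [Real.exp_eq_exp_ℝ, NormedSpace.exp_eq_tsum_div]

lemma desc_shift (x : ℝ) (m k : ℕ) :
    x ^ (k + m) * (Nat.descFactorial (k + m) m : ℝ) / (k + m).factorial
      = x ^ m * (x ^ k / k.factorial) := by
  have h1 : (k.factorial : ℝ) * (Nat.descFactorial (k + m) m : ℝ)
      = ((k + m).factorial : ℝ) := by
    have := Nat.factorial_mul_descFactorial (show m ≤ k + m by omega)
    rw [Nat.add_sub_cancel] at this
    exact_mod_cast this
  have h2 : ((k + m).factorial : ℝ) ≠ 0 := Nat.cast_ne_zero.2 (Nat.factorial_ne_zero _)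
  have h3 : (k.factorial : ℝ) ≠ 0 := Nat.cast_ne_zero.2 (Nat.factorial_ne_zero _)
  rw [pow_add]
  field_simp
  rw [← h1]
  ring

lemma summable_desc (x : ℝ) (m : ℕ) :
    Summable (fun k : ℕ => x ^ k * (Nat.descFactorial k m : ℝ) / k.factorial) := by
  rw [← summable_nat_add_iff m]
  simp only [desc_shift]
  exact (Real.summable_pow_div_factorial x).mul_left _

lemma tsum_desc (x : ℝ) (m : ℕ) :
    ∑' k : ℕ, x ^ k * (Nat.descFactorial k m : ℝ) / k.factorial
      = x ^ m * Real.exp x := by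
  rw [← Summable.sum_add_tsum_nat_add m (summable_desc x m)]
  have h0 : ∀ k ∈ range m, x ^ k * (Nat.descFactorial k m : ℝ) / k.factorial = 0 := by
    intro k hk
    simp only [mem_range] at hk
    rw [Nat.descFactorial_eq_zero_iff_lt.2 hk]
    simp
  rw [Finset.sum_eq_zero h0, zero_add]
  simp only [desc_shift]
  rw [tsum_mul_left, exp_eq_tsum']

lemma pow_expand (x : ℝ) (n k : ℕ) :
    x ^ k * (k : ℝ) ^ n / k.factorial
      = ∑ m ∈ range (n + 1), (S2 n m : ℝ)
          * (x ^ k * (Nat.descFactorial k m : ℝ) / k.factorial) := by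
  have h : ((k : ℝ)) ^ n
      = ∑ m ∈ range (n + 1), (S2 n m : ℝ) * (Nat.descFactorial k m : ℝ) := by
    exact_mod_cast congrArg (fun t : ℕ => (t : ℝ)) (pow_eq_sum_desc n k)
  rw [h, Finset.mul_sum, Finset.sum_div]
  exact Finset.sum_congr rfl fun m _ => by ring

lemma summable_dob0 (n : ℕ) (x : ℝ) :
    Summable (fun k : ℕ => x ^ k * (k : ℝ) ^ n / k.factorial) := by
  simp only [pow_expand]
  exact summable_sum fun m _ => (summable_desc x m).mul_left _

lemma tsum_dob0 (n : ℕ) (x : ℝ) :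
    ∑' k : ℕ, x ^ k * (k : ℝ) ^ n / k.factorial
      = Real.exp x * ∑ m ∈ range (n + 1), (S2 n m : ℝ) * x ^ m := by
  simp only [pow_expand]
  rw [Summable.tsum_finsetSum fun m _ => (summable_desc x m).mul_left _]
  rw [Finset.mul_sum]
  refine Finset.sum_congr rfl fun m _ => ?_
  rw [tsum_mul_left, tsum_desc]
  ring

/-- Generalized Dobiński formula: `B_n^p(x) = e^{-x} ∑_{k≥0} x^k B_n^{p-1}(k) / k!`,
the series being convergent. -/
theorem generalized_dobinski (p : ℕ) (hp : 1 ≤ p) (n : ℕ) (x : ℝ) :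
    Summable (fun k : ℕ => x ^ k * BellP (p - 1) n (k : ℝ) / k.factorial) ∧
      BellP p n x =
        Real.exp (-x) * ∑' k : ℕ, x ^ k * BellP (p - 1) n (k : ℝ) / k.factorial := by
  have hexp : ∀ y : ℝ, Real.exp (-x) * (Real.exp x * y) = y := by
    intro y
    rw [← mul_assoc, ← Real.exp_add, neg_add_cancel, Real.exp_zero, one_mul]
  obtain ⟨q, rfl⟩ : ∃ q, p = q + 1 := ⟨p - 1, by omega⟩
  simp only [Nat.add_sub_cancel]
  cases q with
  | zero =>
    have hB : ∀ k : ℕ, BellP 0 n (k : ℝ) = (k : ℝ) ^ n := fun k => rfl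
    simp only [hB]
    refine ⟨summable_dob0 n x, ?_⟩
    rw [tsum_dob0, hexp]
    show ∑ m ∈ range (n + 1), (Sp 1 n m : ℝ) * x ^ m = _
    exact Finset.sum_congr rfl fun m _ => by rw [Sp_one]
  | succ r =>
    have hB : ∀ k : ℕ, BellP (r + 1) n (k : ℝ)
        = ∑ m ∈ range (n + 1), (Sp (r + 1) n m : ℝ) * (k : ℝ) ^ m := fun k => rfl
    have hexpand : ∀ k : ℕ, x ^ k * BellP (r + 1) n (k : ℝ) / k.factorial
        = ∑ m ∈ range (n + 1), (Sp (r + 1) n m : ℝ)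
            * (x ^ k * (k : ℝ) ^ m / k.factorial) := by
      intro k
      rw [hB, Finset.mul_sum, Finset.sum_div]
      exact Finset.sum_congr rfl fun m _ => by ring
    simp only [hexpand]
    refine ⟨summable_sum fun m _ => (summable_dob0 m x).mul_left _, ?_⟩
    rw [Summable.tsum_finsetSum fun m _ => (summable_dob0 m x).mul_left _]
    have ht : ∀ m : ℕ, ∑' k : ℕ, (Sp (r + 1) n m : ℝ) * (x ^ k * (k : ℝ) ^ m / k.factorial)
        = Real.exp x * ((Sp (r + 1) n m : ℝ)
            * ∑ j ∈ range (m + 1), (S2 m j : ℝ) * x ^ j) := by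
      intro m
      rw [tsum_mul_left, tsum_dob0]
      ring
    simp only [ht]
    rw [← Finset.mul_sum, hexp]
    -- goal: BellP (r+2) n x = ∑ m, Sp(r+1) n m * ∑ j ≤ m, S2 m j * x^j
    show ∑ j ∈ range (n + 1), (Sp (r + 2) n j : ℝ) * x ^ j = _
    have hcoef : ∀ j : ℕ, Sp (r + 2) n j
        = ∑ m ∈ range (n + 1), Sp (r + 1) n m * S2 m j := fun j => (Sp_comm r n j).symm
    have hinner : ∀ m ∈ range (n + 1),
        (Sp (r + 1) n m : ℝ) * ∑ j ∈ range (m + 1), (S2 m j : ℝ) * x ^ j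
          = (Sp (r + 1) n m : ℝ) * ∑ j ∈ range (n + 1), (S2 m j : ℝ) * x ^ j := by
      intro m hm
      simp only [mem_range] at hm
      congr 1
      apply Finset.sum_subset
      · intro a ha; simp only [mem_range] at *; omega
      · intro j _ hj
        simp only [mem_range, not_lt] at hj
        rw [S2_eq_zero (show m < j by omega), Nat.cast_zero, zero_mul]
    rw [Finset.sum_congr rfl hinner]
    simp only [hcoef]
    push_cast
    simp only [Finset.sum_mul]
    rw [Finset.sum_comm]
    refine Finset.sum_congr rfl fun m _ => ?_
    rw [Finset.mul_sum]
    exact Finset.sum_congr rfl fun j _ => by ring
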